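/- Let Y^k : [0,∞) → ℝ be a sequence of non-decreasing right-continuous functions converging pointwise at all continuity points of a non-decreasing RCLL limit Y, and let X^k → X uniformly on compacts with X continuous. Suppose for every interval [τ, τ+δ] on which the oscillation of X is less than C, the limit W = X + Y satisfies sup_{t∈[τ,τ+δ]} W(t) ≤ W(τ−) + 2C whenever W(τ−) exists. Then Y is continuous: Y has no jump, since a jump of size C_J > 0 at t_J would force W(t_J+) − W(t) > C_J − 2C > 0 for all t in a left-neighborhood interval with oscillation bound C < C_J/2, contradicting right-continuity of W. -/

import Mathlib

theorem regulator_continuous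
    (X Y : ℝ → ℝ) (hX : Continuous X)
    (hYmono : Monotone Y)
    (hYright : ∀ t, ContinuousWithinAt Y (Set.Ici t) t)
    (hbound : ∀ τ δ C : ℝ, 0 < δ → 0 < C →
      (∀ s ∈ Set.Icc τ (τ + δ), ∀ t ∈ Set.Icc τ (τ + δ), |X s - X t| ≤ C) →
      ∀ t ∈ Set.Icc τ (τ + δ),
        X t + Y t ≤ (X τ + sSup (Y '' Set.Iio τ)) + 2 * C) :
    Continuous Y := by
  -- key: no jump
  have key : ∀ t : ℝ, sSup (Y '' Set.Iio t) = Y t := by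
    intro t
    have hbdd : ∀ u : ℝ, BddAbove (Y '' Set.Iio u) := fun u =>
      ⟨Y u, by rintro _ ⟨s, hs, rfl⟩; exact hYmono (le_of_lt hs)⟩
    have hne : ∀ u : ℝ, (Y '' Set.Iio u).Nonempty := fun u =>
      ⟨Y (u - 1), ⟨u - 1, by simp, rfl⟩⟩
    have hle : sSup (Y '' Set.Iio t) ≤ Y t := by
      apply csSup_le (hne t)
      rintro _ ⟨s, hs, rfl⟩; exact hYmono (le_of_lt hs)
    rcases eq_or_lt_of_le hle with h | h
    · exact h
    exfalso
    set L := sSup (Y '' Set.Iio t) with hL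
    set J := Y t - L with hJ
    have hJpos : 0 < J := by simp [hJ]; linarith
    set C := J / 4 with hC
    have hCpos : 0 < C := by positivity
    -- continuity of X at t: find δ
    obtain ⟨δ, hδpos, hδ⟩ := Metric.continuousAt_iff.1 (hX.continuousAt (x := t)) (C / 2)
      (by positivity)
    set d := δ / 2 with hd
    have hdpos : 0 < d := by positivity
    have hosc : ∀ s ∈ Set.Icc (t - d) ((t - d) + 2 * d), ∀ u ∈ Set.Icc (t - d) ((t - d) + 2 * d),
        |X s - X u| ≤ C := by
      intro s hs u hu
      have hs' : dist s t < δ := by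
        rw [Real.dist_eq]
        rw [Set.mem_Icc] at hs
        rw [abs_lt]; constructor <;> [linarith [hs.1]; linarith [hs.2]]
      have hu' : dist u t < δ := by
        rw [Real.dist_eq]
        rw [Set.mem_Icc] at hu
        rw [abs_lt]; constructor <;> [linarith [hu.1]; linarith [hu.2]]
      have h1 := hδ hs'
      have h2 := hδ hu'
      rw [Real.dist_eq] at h1 h2
      calc |X s - X u| ≤ |X s - X t| + |X t - X u| := abs_sub_le _ _ _
        _ ≤ C / 2 + C / 2 := by rw [abs_sub_comm (X t) (X u)]; linarith
        _ = C := by ring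
    have ht : t ∈ Set.Icc (t - d) ((t - d) + 2 * d) := by
      constructor <;> [linarith; linarith]
    have hb := hbound (t - d) (2 * d) C (by positivity) hCpos hosc t ht
    -- sSup over Iio (t-d) ≤ L
    have hsub : sSup (Y '' Set.Iio (t - d)) ≤ L := by
      apply csSup_le (hne _)
      rintro _ ⟨s, hs, rfl⟩
      exact le_csSup (hbdd t) ⟨s, by simp at hs ⊢; linarith, rfl⟩
    have hXtd : |X (t - d) - X t| ≤ C / 2 := by
      have : dist (t - d) t < δ := by rw [Real.dist_eq]; rw [abs_lt]; constructor <;> linarith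
      have := hδ this; rw [Real.dist_eq] at this; linarith
    have h1 : X (t - d) - X t ≤ C / 2 := (abs_le.1 hXtd).2
    have : Y t - L ≤ C / 2 + 2 * C := by linarith
    rw [hC] at this
    linarith
  -- continuity from left + right continuity
  rw [continuous_iff_continuousAt]
  intro t
  apply continuousAt_iff_continuous_left_right.2
  refine ⟨?_, (hYright t)⟩
  have := hYmono.tendsto_nhdsLT t
  rw [key t] at this
  rw [← continuousWithinAt_Iio_iff_Iic]
  exact this
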